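/- There exists an instance of the capacitated assignment problem in which the sets of utilitarian-maximal, egalitarian-maximal, and Σ-OWA-maximal (with α = (1, 1/2)) assignments are pairwise disjoint. Concretely: with 4 agents, 4 objects, every agent assigned exactly 2 objects and every object assigned to exactly 2 agents, and the utility matrix u(a_1) = (11,9,0,0), u(a_2) = (8,8,2,2), u(a_3) = (7,7,3,3), u(a_4) = (6,6,4,4) over objects (o_1,o_2,o_3,o_4), no assignment is maximal for more than one of the three objectives. -/

import Mathlib

noncomputable def sortDesc {K : ℕ} (x : Fin K → ℝ) : Fin K → ℝ :=
  x ∘ Tuple.sort (fun i => -x i)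

noncomputable def owa {K : ℕ} (α x : Fin K → ℝ) : ℝ :=
  ∑ i, α i * sortDesc x i

noncomputable def owaVal (K : ℕ) (α : Fin K → ℝ) (vals : Multiset ℝ) : ℝ :=
  ∑ j : Fin K, α j * ((Multiset.sort vals (· ≤ ·)).reverse.getD j 0)

def theU : Fin 4 → Fin 4 → ℝ := ![![11,9,0,0], ![8,8,2,2], ![7,7,3,3], ![6,6,4,4]]

def FeasibleI (A : Fin 4 → Finset (Fin 4)) : Prop :=
  (∀ a, (A a).card = 2) ∧ ∀ o : Fin 4, (Finset.univ.filter (fun a => o ∈ A a)).card = 2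

noncomputable def utilI (A : Fin 4 → Finset (Fin 4)) : ℝ := ∑ a, ∑ o ∈ A a, theU a o

noncomputable def egalI (A : Fin 4 → Finset (Fin 4)) : ℝ :=
  Finset.univ.inf' Finset.univ_nonempty (fun a => ∑ o ∈ A a, theU a o)

noncomputable def owaI (A : Fin 4 → Finset (Fin 4)) : ℝ :=
  ∑ a, owaVal 2 ![1, 1/2] ((A a).val.map (theU a))

/-! ### Auxiliary natural-number versions of the objectives -/

def uN : Fin 4 → Fin 4 → ℕ := ![![11,9,0,0], ![8,8,2,2], ![7,7,3,3], ![6,6,4,4]]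

def pairF : Fin 6 → Finset (Fin 4) := ![{0,1},{0,2},{0,3},{1,2},{1,3},{2,3}]

instance : DecidablePred FeasibleI := fun A => by unfold FeasibleI; infer_instance

def rowN (A : Fin 4 → Finset (Fin 4)) (a : Fin 4) : ℕ := ∑ o ∈ A a, uN a o

def utilN (A : Fin 4 → Finset (Fin 4)) : ℕ := ∑ a, rowN A a

def egalN (A : Fin 4 → Finset (Fin 4)) : ℕ :=
  min (min (rowN A 0) (rowN A 1)) (min (rowN A 2) (rowN A 3))

def mxN (s : Finset (Fin 4)) (a : Fin 4) : ℕ :=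
  max (max (if (0:Fin 4) ∈ s then uN a 0 else 0) (if (1:Fin 4) ∈ s then uN a 1 else 0))
      (max (if (2:Fin 4) ∈ s then uN a 2 else 0) (if (3:Fin 4) ∈ s then uN a 3 else 0))

def owaN (A : Fin 4 → Finset (Fin 4)) : ℕ := ∑ a, (rowN A a + mxN (A a) a)

set_option maxRecDepth 20000 in
lemma key : ∀ k1 k2 k3 k4 : Fin 6, FeasibleI (fun a => pairF (![k1,k2,k3,k4] a)) →
    ¬(50 ≤ utilN (fun a => pairF (![k1,k2,k3,k4] a)) ∧
      10 ≤ egalN (fun a => pairF (![k1,k2,k3,k4] a))) ∧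
    ¬(50 ≤ utilN (fun a => pairF (![k1,k2,k3,k4] a)) ∧
      78 ≤ owaN (fun a => pairF (![k1,k2,k3,k4] a))) ∧
    ¬(10 ≤ egalN (fun a => pairF (![k1,k2,k3,k4] a)) ∧
      78 ≤ owaN (fun a => pairF (![k1,k2,k3,k4] a))) := by decide

lemma card_two_mem : ∀ s : Finset (Fin 4), s.card = 2 → ∃ k, s = pairF k := by decide

lemma mxN_pair : ∀ (a i j : Fin 4), i ≠ j → mxN {i,j} a = max (uN a i) (uN a j) := by decide

lemma theU_eq (a o : Fin 4) : theU a o = (uN a o : ℝ) := by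
  fin_cases a <;> fin_cases o <;> norm_num [theU, uN]

lemma utilI_eq (A : Fin 4 → Finset (Fin 4)) : utilI A = (utilN A : ℝ) := by
  simp only [utilI, utilN, rowN, Nat.cast_sum, theU_eq]

lemma inf'_fin4 {α : Type*} [LinearOrder α] (f : Fin 4 → α) :
    Finset.univ.inf' Finset.univ_nonempty f = min (min (f 0) (f 1)) (min (f 2) (f 3)) := by
  apply le_antisymm
  · simp only [le_min_iff]
    exact ⟨⟨Finset.inf'_le f (Finset.mem_univ _), Finset.inf'_le f (Finset.mem_univ _)⟩,
           Finset.inf'_le f (Finset.mem_univ _), Finset.inf'_le f (Finset.mem_univ _)⟩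
  · apply Finset.le_inf'
    intro a _
    fin_cases a <;> simp [min_le_iff]

lemma egalI_eq (A : Fin 4 → Finset (Fin 4)) : egalI A = (egalN A : ℝ) := by
  simp only [egalI, egalN, inf'_fin4, rowN, Nat.cast_min, Nat.cast_sum, theU_eq]

lemma sort_pair (x y : ℝ) (h : x ≤ y) :
    Multiset.sort ({x, y} : Multiset ℝ) (· ≤ ·) = [x, y] := by
  have hperm : (Multiset.sort ({x, y} : Multiset ℝ) (· ≤ ·)).Perm [x, y] := by
    rw [← Multiset.coe_eq_coe, Multiset.sort_eq]; rfl
  exact List.Perm.eq_of_pairwise' (Multiset.pairwise_sort _ _)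
    (by simp [List.pairwise_cons, h]) hperm

lemma owaVal_two (x y : ℝ) (h : x ≤ y) : owaVal 2 ![1, 1/2] {x, y} = y + x / 2 := by
  rw [owaVal, sort_pair x y h, Fin.sum_univ_two]
  norm_num
  ring_nf

lemma owaVal_term (a i j : Fin 4) (hij : i ≠ j) :
    owaVal 2 ![1, 1/2] (({i,j} : Finset (Fin 4)).val.map (theU a)) =
      ((uN a i + uN a j + max (uN a i) (uN a j) : ℕ) : ℝ) / 2 := by
  have hval : (({i,j} : Finset (Fin 4)).val.map (theU a)) = {theU a i, theU a j} := by
    rw [Finset.insert_val_of_notMem (by simp [hij]), Multiset.map_cons]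
    simp
  rw [hval, theU_eq, theU_eq]
  rcases le_total (uN a i) (uN a j) with h | h
  · rw [owaVal_two _ _ (by exact_mod_cast h), max_eq_right h]
    push_cast; ring
  · rw [show ({((uN a i : ℝ)), ((uN a j : ℝ))} : Multiset ℝ) = {((uN a j : ℝ)), ((uN a i : ℝ))}
        from Multiset.cons_swap _ _ _,
        owaVal_two _ _ (by exact_mod_cast h), max_eq_left h]
    push_cast; ring

lemma owaI_eq (A : Fin 4 → Finset (Fin 4)) (h2 : ∀ a, (A a).card = 2) :
    owaI A = (owaN A : ℝ) / 2 := by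
  rw [owaI, owaN, Nat.cast_sum, Finset.sum_div]
  refine Finset.sum_congr rfl fun a _ => ?_
  obtain ⟨i, j, hij, hsij⟩ := Finset.card_eq_two.mp (h2 a)
  rw [hsij, owaVal_term a i j hij, rowN, hsij, Finset.sum_pair hij, mxN_pair a i j hij]

def Bu : Fin 4 → Finset (Fin 4) := ![{0,1},{0,1},{2,3},{2,3}]
def Be : Fin 4 → Finset (Fin 4) := ![{0,2},{0,2},{1,3},{1,3}]
def Bw : Fin 4 → Finset (Fin 4) := ![{0,1},{0,2},{1,3},{2,3}]

lemma feasBu : FeasibleI Bu := by decide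
lemma feasBe : FeasibleI Be := by decide
lemma feasBw : FeasibleI Bw := by decide
lemma valBu : utilN Bu = 50 := by decide
lemma valBe : egalN Be = 10 := by decide
lemma valBw : owaN Bw = 78 := by decide

/-- In this instance, no feasible assignment is maximal for more than one of the
utilitarian, egalitarian and Σ-OWA (α = (1,1/2)) objectives. -/
theorem objectives_pairwise_disjoint :
    ∀ A, FeasibleI A →
      (¬ ((∀ B, FeasibleI B → utilI B ≤ utilI A) ∧ (∀ B, FeasibleI B → egalI B ≤ egalI A)) ∧
       ¬ ((∀ B, FeasibleI B → utilI B ≤ utilI A) ∧ (∀ B, FeasibleI B → owaI B ≤ owaI A)) ∧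
       ¬ ((∀ B, FeasibleI B → egalI B ≤ egalI A) ∧ (∀ B, FeasibleI B → owaI B ≤ owaI A))) := by
  intro A hA
  obtain ⟨k1, e1⟩ := card_two_mem (A 0) (hA.1 0)
  obtain ⟨k2, e2⟩ := card_two_mem (A 1) (hA.1 1)
  obtain ⟨k3, e3⟩ := card_two_mem (A 2) (hA.1 2)
  obtain ⟨k4, e4⟩ := card_two_mem (A 3) (hA.1 3)
  have hAeq : A = fun a => pairF (![k1,k2,k3,k4] a) := by
    funext a
    fin_cases a
    exacts [e1, e2, e3, e4]
  have hk := key k1 k2 k3 k4 (hAeq ▸ hA)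
  rw [← hAeq] at hk
  have hUtil : (∀ B, FeasibleI B → utilI B ≤ utilI A) → 50 ≤ utilN A := by
    intro h
    have := h Bu feasBu
    rw [utilI_eq, utilI_eq, valBu] at this
    exact_mod_cast this
  have hEgal : (∀ B, FeasibleI B → egalI B ≤ egalI A) → 10 ≤ egalN A := by
    intro h
    have := h Be feasBe
    rw [egalI_eq, egalI_eq, valBe] at this
    exact_mod_cast this
  have hOwa : (∀ B, FeasibleI B → owaI B ≤ owaI A) → 78 ≤ owaN A := by
    intro h
    have := h Bw feasBw
    rw [owaI_eq Bw feasBw.1, owaI_eq A hA.1, valBw] at this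
    have h78 : (78 : ℝ) ≤ (owaN A : ℝ) := by linarith
    exact_mod_cast h78
  exact ⟨fun ⟨h1, h2⟩ => hk.1 ⟨hUtil h1, hEgal h2⟩,
         fun ⟨h1, h2⟩ => hk.2.1 ⟨hUtil h1, hOwa h2⟩,
         fun ⟨h1, h2⟩ => hk.2.2 ⟨hEgal h1, hOwa h2⟩⟩
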